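/- Let X be a measurable space, x_obs ∈ X with {x_obs} measurable, and let (μ_ψ)_{ψ ∈ ℝ^k} be a family of probability measures on X with μ_ψ({x_obs}) = 0 for every ψ ∈ ℝ^k. Let a : [0,1] → ℝ be strictly increasing and b : [0,1] → ℝ be strictly decreasing. Define F : ℝ^k → ℝ by F(ψ) = sup over measurable d : X → [0,1] of [ a(d(x_obs)) + ∫ b(d(x)) dμ_ψ(x) ]. Then F(ψ) = a(1) + b(0) for every ψ; in particular F is constant, so its Fréchet derivative (gradient with respect to ψ) is zero at every ψ. -/

import Mathlib

open MeasureTheory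

/-- **Proposition 1 (i): gradient zero on optimal discriminator.** With a single real
observation `x_obs` and a family of generator distributions `μ ψ` indexed by the proposal
parameter `ψ ∈ ℝ^k`, the optimal-discriminator value
`F ψ = sup_d [a (d x_obs) + ∫ b (d x) ∂(μ ψ)]` is the constant `a 1 + b 0`; in particular its
gradient (Fréchet derivative) with respect to `ψ` vanishes everywhere. -/
theorem optimal_discriminator_value_constant_gradient_zero
    {X : Type*} [MeasurableSpace X] {k : ℕ} (x_obs : X)
    (hx : MeasurableSet ({x_obs} : Set X))
    (μ : EuclideanSpace ℝ (Fin k) → Measure X)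
    (hμp : ∀ ψ, IsProbabilityMeasure (μ ψ))
    (hμ0 : ∀ ψ, μ ψ {x_obs} = 0)
    (a b : ℝ → ℝ)
    (ha : StrictMonoOn a (Set.Icc 0 1)) (hb : StrictAntiOn b (Set.Icc 0 1))
    (F : EuclideanSpace ℝ (Fin k) → ℝ)
    (hF : ∀ ψ, F ψ = sSup {v : ℝ | ∃ d : X → ℝ, Measurable d ∧
      (∀ x, d x ∈ Set.Icc (0 : ℝ) 1) ∧ v = a (d x_obs) + ∫ x, b (d x) ∂(μ ψ)}) :
    (∀ ψ, F ψ = a 1 + b 0) ∧ (∀ ψ, fderiv ℝ F ψ = 0) := by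
  -- clamped version of b, antitone hence measurable
  set c : ℝ → ℝ := fun x => b (max 0 (min 1 x)) with hc
  have hclamp : ∀ x : ℝ, x ∈ Set.Icc (0:ℝ) 1 → max 0 (min 1 x) = x := by
    rintro x ⟨h0, h1⟩
    rw [min_eq_right h1, max_eq_right h0]
  have hcmem : ∀ x : ℝ, max 0 (min 1 x) ∈ Set.Icc (0:ℝ) 1 := by
    intro x
    exact ⟨le_max_left _ _, max_le (by norm_num) (min_le_left _ _)⟩
  have h0mem : (0:ℝ) ∈ Set.Icc (0:ℝ) 1 := by constructor <;> norm_num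
  have h1mem : (1:ℝ) ∈ Set.Icc (0:ℝ) 1 := by constructor <;> norm_num
  have hcanti : Antitone c := by
    intro x y hxy
    exact hb.antitoneOn (hcmem x) (hcmem y)
      (max_le_max le_rfl (min_le_min le_rfl hxy))
  have hcmeas : Measurable c := hcanti.measurable
  have key : ∀ ψ, F ψ = a 1 + b 0 := by
    intro ψ
    have hprob := hμp ψ
    -- the target value is attained
    have hmem : a 1 + b 0 ∈ {v : ℝ | ∃ d : X → ℝ, Measurable d ∧
        (∀ x, d x ∈ Set.Icc (0 : ℝ) 1) ∧ v = a (d x_obs) + ∫ x, b (d x) ∂(μ ψ)} := by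
      refine ⟨Set.indicator {x_obs} (fun _ => (1:ℝ)),
        measurable_const.indicator hx, ?_, ?_⟩
      · intro x
        by_cases h : x ∈ ({x_obs} : Set X)
        · rw [Set.indicator_of_mem h]; exact h1mem
        · rw [Set.indicator_of_notMem h]; exact h0mem
      · have hobs : Set.indicator {x_obs} (fun _ => (1:ℝ)) x_obs = 1 :=
          Set.indicator_of_mem (Set.mem_singleton x_obs) _
        have hae : (fun x : X => b (Set.indicator {x_obs} (fun _ => (1:ℝ)) x))
            =ᵐ[μ ψ] fun _ => b 0 := by
          filter_upwards [measure_eq_zero_iff_ae_notMem.mp (hμ0 ψ)] with x hxne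
          rw [Set.indicator_of_notMem hxne]
        rw [integral_congr_ae hae, integral_const, hobs]
        simp
    -- upper bound
    have hub : ∀ v ∈ {v : ℝ | ∃ d : X → ℝ, Measurable d ∧
        (∀ x, d x ∈ Set.Icc (0 : ℝ) 1) ∧ v = a (d x_obs) + ∫ x, b (d x) ∂(μ ψ)},
        v ≤ a 1 + b 0 := by
      rintro v ⟨d, hdmeas, hdmem, rfl⟩
      have hbd : ∀ x, b (d x) = c (d x) := fun x => by
        show b (d x) = b (max 0 (min 1 (d x)))
        rw [hclamp _ (hdmem x)]
      have hint : Integrable (fun x => b (d x)) (μ ψ) := by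
        simp_rw [hbd]
        apply Integrable.mono' (g := fun _ => max |b 0| |b 1|)
          (integrable_const _) ((hcmeas.comp hdmeas).aestronglyMeasurable)
        filter_upwards with x
        have hub1 : c (d x) ≤ b 0 := hb.antitoneOn h0mem (hcmem (d x)) (hcmem (d x)).1
        have hlb1 : b 1 ≤ c (d x) := hb.antitoneOn (hcmem (d x)) h1mem (hcmem (d x)).2
        have : ‖c (d x)‖ ≤ max |b 0| |b 1| := by
          rw [Real.norm_eq_abs, abs_le]
          constructor
          · calc -(max |b 0| |b 1|) ≤ -|b 1| := by simp
              _ ≤ b 1 := neg_abs_le _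
              _ ≤ c (d x) := hlb1
          · calc c (d x) ≤ b 0 := hub1
              _ ≤ |b 0| := le_abs_self _
              _ ≤ max |b 0| |b 1| := le_max_left _ _
        exact this
      have h2 : ∫ x, b (d x) ∂(μ ψ) ≤ b 0 := by
        have := integral_mono hint (integrable_const (b 0))
          (fun x => hb.antitoneOn h0mem (hdmem x) (hdmem x).1)
        simpa using this
      have h3 : a (d x_obs) ≤ a 1 :=
        ha.monotoneOn (hdmem x_obs) h1mem (hdmem x_obs).2
      linarith
    rw [hF ψ]
    exact le_antisymm (csSup_le ⟨_, hmem⟩ hub) (le_csSup ⟨_, hub⟩ hmem)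
  refine ⟨key, fun ψ => ?_⟩
  have : F = fun _ => a 1 + b 0 := funext key
  rw [this, fderiv_fun_const]
  rfl
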